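/- arXiv:math/0201118 — 5 statements merged into one kernel-verified Lean document; each statement's English description precedes it below -/
import Mathlib

section
/- Let f : Γ → Δ be a surjective group homomorphism, let Δ' be a finite-index subgroup of Δ, let Γ' = f⁻¹(Δ'), and let g : Γ' → Δ' be the (surjective) restriction of f. Assume ℚ ⊗_ℤ (Γ')^{ab} and ℚ ⊗_ℤ (Δ')^{ab} are finite-dimensional. Then the induced map g_* : ℚ ⊗_ℤ (Γ')^{ab} → ℚ ⊗_ℤ (Δ')^{ab} maps the kernel of i_{1*} : ℚ ⊗_ℤ (Γ')^{ab} → ℚ ⊗_ℤ Γ^{ab} onto the kernel of i_{2*} : ℚ ⊗_ℤ (Δ')^{ab} → ℚ ⊗_ℤ Δ^{ab}, where i_{1*} and i_{2*} are induced by the inclusions Γ' ≤ Γ and Δ' ≤ Δ. -/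
open scoped TensorProduct

/-- First homology of a group with ℚ-coefficients: `ℚ ⊗_ℤ G^{ab}`. -/
abbrev QH1 (G : Type*) [Group G] : Type _ :=
  ℚ ⊗[ℤ] Additive (Abelianization G)

/-- The ℚ-linear map on first homology induced by a group homomorphism. -/
noncomputable def inducedMap {G H : Type*} [Group G] [Group H] (f : G →* H) :
    QH1 G →ₗ[ℚ] QH1 H :=
  LinearMap.baseChange ℚ
    (MonoidHom.toAdditive (Abelianization.map f)).toIntLinearMap

lemma of_surjective {G : Type*} [Group G] :
    Function.Surjective (Abelianization.of : G →* Abelianization G) := fun b =>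
  QuotientGroup.induction_on b fun γ => ⟨γ, rfl⟩

lemma inducedMap_tmul {G H : Type*} [Group G] [Group H] (f : G →* H) (q : ℚ) (γ : G) :
    inducedMap f (q ⊗ₜ[ℤ] Additive.ofMul (Abelianization.of γ)) =
      q ⊗ₜ[ℤ] Additive.ofMul (Abelianization.of (f γ)) := rfl

lemma inducedMap_comp {G H K : Type*} [Group G] [Group H] [Group K]
    (g : H →* K) (f : G →* H) (x : QH1 G) :
    inducedMap (g.comp f) x = inducedMap g (inducedMap f x) := by
  induction x using TensorProduct.induction_on with
  | zero => simp
  | tmul q a =>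
    obtain ⟨b, rfl⟩ : ∃ b, Additive.ofMul b = a := ⟨a.toMul, rfl⟩
    obtain ⟨γ, rfl⟩ := of_surjective b
    rw [inducedMap_tmul, inducedMap_tmul, inducedMap_tmul]
    rfl
  | add x y hx hy => simp [hx, hy]

lemma inducedMap_surjective {G H : Type*} [Group G] [Group H] (f : G →* H)
    (hf : Function.Surjective f) : Function.Surjective (inducedMap f) := by
  have h1 : Function.Surjective
      (MonoidHom.toAdditive (Abelianization.map f)).toIntLinearMap := by
    intro b
    obtain ⟨b', rfl⟩ : ∃ b', Additive.ofMul b' = b := ⟨b.toMul, rfl⟩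
    obtain ⟨δ, rfl⟩ := of_surjective b'
    obtain ⟨γ, rfl⟩ := hf δ
    exact ⟨Additive.ofMul (Abelianization.of γ), rfl⟩
  have h2 : ⇑(inducedMap f) =
      ⇑(LinearMap.lTensor ℚ (MonoidHom.toAdditive (Abelianization.map f)).toIntLinearMap) :=
    LinearMap.baseChange_eq_ltensor _
  show Function.Surjective ⇑(inducedMap f)
  rw [h2]
  exact LinearMap.lTensor_surjective ℚ h1

/-- Generators of the kernel: classes of elements of `ker f`. -/
def kerSet {G H : Type*} [Group G] [Group H] (f : G →* H) : Set (QH1 G) :=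
  {x | ∃ n : G, f n = 1 ∧ x = (1 : ℚ) ⊗ₜ[ℤ] Additive.ofMul (Abelianization.of n)}

lemma ker_inducedMap_le_span {G H : Type*} [Group G] [Group H] (f : G →* H)
    (hf : Function.Surjective f) :
    LinearMap.ker (inducedMap f) ≤ Submodule.span ℚ (kerSet f) := by
  set K := Submodule.span ℚ (kerSet f) with hK
  set t : G → QH1 G ⧸ K := fun γ =>
    Submodule.Quotient.mk ((1 : ℚ) ⊗ₜ[ℤ] Additive.ofMul (Abelianization.of γ)) with ht
  have key : ∀ γ₁ γ₂ : G, f γ₁ = f γ₂ → t γ₁ = t γ₂ := by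
    intro γ₁ γ₂ h
    rw [ht]
    dsimp only
    rw [Submodule.Quotient.eq]
    have e : (1 : ℚ) ⊗ₜ[ℤ] Additive.ofMul (Abelianization.of γ₁)
        - (1 : ℚ) ⊗ₜ[ℤ] Additive.ofMul (Abelianization.of γ₂)
        = (1 : ℚ) ⊗ₜ[ℤ] Additive.ofMul (Abelianization.of (γ₁ * γ₂⁻¹)) := by
      rw [← TensorProduct.tmul_sub]
      congr 1
      simp [sub_eq_add_neg]
    rw [e]
    exact Submodule.subset_span ⟨γ₁ * γ₂⁻¹, by simp [h], rfl⟩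
  have tmul : ∀ γ₁ γ₂ : G, t (γ₁ * γ₂) = t γ₁ + t γ₂ := by
    intro γ₁ γ₂
    rw [ht]
    dsimp only
    rw [← Submodule.Quotient.mk_add, map_mul]
    congr 1
    rw [ofMul_mul, TensorProduct.tmul_add]
  choose sec hsec using hf
  have hmk : ∀ γ : G, t (sec (f γ)) = t γ := fun γ => key _ _ (hsec (f γ))
  have t1 : t 1 = 0 := by
    rw [ht]
    dsimp only
    rw [map_one, ofMul_one, TensorProduct.tmul_zero, Submodule.Quotient.mk_zero]
  set s : H →* Multiplicative (QH1 G ⧸ K) :=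
    { toFun := fun h => Multiplicative.ofAdd (t (sec h))
      map_one' := by
        have h1 : t (sec 1) = t 1 := by conv_lhs => rw [← f.map_one, hmk]
        simp [h1, t1]
      map_mul' := fun h₁ h₂ => by
        have hlift : f (sec h₁ * sec h₂) = h₁ * h₂ := by rw [map_mul, hsec, hsec]
        have h3 : t (sec (h₁ * h₂)) = t (sec h₁ * sec h₂) := by
          conv_lhs => rw [← hlift, hmk]
        simp only [h3, tmul]
        rfl } with hs
  set ℓ : Additive (Abelianization H) →+ QH1 G ⧸ K :=
    MonoidHom.toAdditiveLeft (Abelianization.lift s) with hℓ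
  set r : QH1 H →ₗ[ℚ] QH1 G ⧸ K := LinearMap.liftBaseChange ℚ ℓ.toIntLinearMap with hr
  have hretr : ∀ x : QH1 G, r (inducedMap f x) = Submodule.Quotient.mk x := by
    intro x
    induction x using TensorProduct.induction_on with
    | zero => simp
    | tmul q a =>
      obtain ⟨b, rfl⟩ : ∃ b, Additive.ofMul b = a := ⟨a.toMul, rfl⟩
      obtain ⟨γ, rfl⟩ := of_surjective b
      rw [inducedMap_tmul, hr, LinearMap.liftBaseChange_tmul]
      have hl : ℓ.toIntLinearMap (Additive.ofMul (Abelianization.of (f γ))) = t γ := by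
        have : (Abelianization.lift s) (Abelianization.of (f γ)) = s (f γ) :=
          Abelianization.lift_apply_of s (f γ)
        rw [hℓ]
        show Multiplicative.toAdd ((Abelianization.lift s) (Abelianization.of (f γ))) = t γ
        rw [this]
        show t (sec (f γ)) = t γ
        exact hmk γ
      rw [hl, ht]
      dsimp only
      rw [← Submodule.Quotient.mk_smul, TensorProduct.smul_tmul', smul_eq_mul, mul_one]
    | add x y hx hy => rw [map_add, map_add, hx, hy, Submodule.Quotient.mk_add]
  intro x hx
  rw [LinearMap.mem_ker] at hx
  have := hretr x
  rw [hx, map_zero] at this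
  rwa [eq_comm, Submodule.Quotient.mk_eq_zero] at this

/-- The ℚ-linear map on first homology induced by the transfer homomorphism
`G → H^{ab}` of a finite-index subgroup `H ≤ G`. -/
noncomputable def transferMap {G : Type*} [Group G] (H : Subgroup G) [H.FiniteIndex] :
    QH1 G →ₗ[ℚ] QH1 H :=
  LinearMap.baseChange ℚ
    (MonoidHom.toAdditive
      (Abelianization.lift (MonoidHom.transfer (Abelianization.of : H →* Abelianization H)))).toIntLinearMap

theorem stmt5 {Γ Δ : Type*} [Group Γ] [Group Δ] (f : Γ →* Δ)
    (hf : Function.Surjective f) (Δ' : Subgroup Δ) [Δ'.FiniteIndex]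
    [FiniteDimensional ℚ (QH1 (Δ'.comap f))] [FiniteDimensional ℚ (QH1 Δ')] :
    Submodule.map (inducedMap (f.subgroupComap Δ'))
        (LinearMap.ker (inducedMap (Δ'.comap f).subtype)) =
      LinearMap.ker (inducedMap Δ'.subtype) := by
  set g := f.subgroupComap Δ' with hgdef
  have hg : Function.Surjective g := by
    rintro ⟨δ, hδ⟩
    obtain ⟨γ, rfl⟩ := hf δ
    exact ⟨⟨γ, hδ⟩, rfl⟩
  have hsq : Δ'.subtype.comp g = f.comp (Δ'.comap f).subtype := rfl
  apply le_antisymm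
  · rintro _ ⟨x, hx, rfl⟩
    simp only [SetLike.mem_coe, LinearMap.mem_ker] at hx ⊢
    rw [← inducedMap_comp, hsq, inducedMap_comp, hx, map_zero]
  · intro y hy
    rw [LinearMap.mem_ker] at hy
    obtain ⟨x, rfl⟩ := inducedMap_surjective g hg y
    have hker : inducedMap (Δ'.comap f).subtype x ∈ LinearMap.ker (inducedMap f) := by
      rw [LinearMap.mem_ker, ← inducedMap_comp, ← hsq, inducedMap_comp, hy]
    have hxK := ker_inducedMap_le_span f hf hker
    have hspan : Submodule.span ℚ (kerSet f) ≤
        Submodule.map (inducedMap (Δ'.comap f).subtype)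
          (LinearMap.ker (inducedMap g)) := by
      rw [Submodule.span_le]
      rintro _ ⟨n, hn, rfl⟩
      have hn' : n ∈ Δ'.comap f := by
        rw [Subgroup.mem_comap, hn]
        exact Δ'.one_mem
      refine ⟨(1 : ℚ) ⊗ₜ[ℤ] Additive.ofMul (Abelianization.of (⟨n, hn'⟩ : Δ'.comap f)), ?_, ?_⟩
      · simp only [SetLike.mem_coe, LinearMap.mem_ker]
        rw [inducedMap_tmul]
        have : g (⟨n, hn'⟩ : Δ'.comap f) = 1 := by
          ext
          exact hn
        rw [this, map_one, ofMul_one, TensorProduct.tmul_zero]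
      · rw [inducedMap_tmul]
        rfl
    obtain ⟨z, hz, hzx⟩ := hspan hxK
    simp only [SetLike.mem_coe, LinearMap.mem_ker] at hz
    refine ⟨x - z, ?_, ?_⟩
    · simp only [SetLike.mem_coe, LinearMap.mem_ker]
      rw [map_sub, hzx, sub_self]
    · rw [map_sub, hz, sub_zero]
end

section
/- Let f : Γ → Δ be a surjective group homomorphism, and suppose b₁(Γ) and b₁(Δ) are finite. Then for every finite-index subgroup Δ' of Δ, the preimage Γ' = f⁻¹(Δ') is a finite-index subgroup of Γ satisfying b₁(Γ') + b₁(Δ) ≥ b₁(Δ') + b₁(Γ). (In particular, vb₁(Γ) − b₁(Γ) ≥ vb₁(Δ) − b₁(Δ), where vb₁ denotes the supremum of b₁ over all finite-index subgroups.) -/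
open scoped TensorProduct

universe u

instance : Module.Flat ℤ ℚ := IsLocalization.flat ℚ (nonZeroDivisors ℤ)

section Aux

variable {G H : Type*} [Group G] [Group H]

lemma abmap_surjective (g : G →* H) (hg : Function.Surjective g) :
    Function.Surjective (Abelianization.map g) := fun x =>
  QuotientGroup.induction_on x fun h => by
    obtain ⟨a, rfl⟩ := hg h
    exact ⟨Abelianization.of a, rfl⟩

lemma abmap_ker (g : G →* H) (hg : Function.Surjective g) :
    (Abelianization.map g).ker = (g.ker).map (Abelianization.of) := by
  have hcomm : Subgroup.map g (commutator G) = commutator H := by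
    rw [commutator_def, commutator_def, Subgroup.map_commutator]
    congr 1 <;> exact (Subgroup.map_top_of_surjective g hg)
  ext x
  refine QuotientGroup.induction_on x fun a => ?_
  show Abelianization.of a ∈ _ ↔ Abelianization.of a ∈ _
  simp only [MonoidHom.mem_ker, Subgroup.mem_map]
  constructor
  · intro h
    have h1 : g a ∈ commutator H := by
      have : Abelianization.of (g a) = 1 := h
      exact (QuotientGroup.eq_one_iff (g a)).mp this
    rw [← hcomm] at h1
    obtain ⟨c, hc, hca⟩ := h1
    refine ⟨a * c⁻¹, ?_, ?_⟩
    · simp [MonoidHom.mem_ker, hca]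
    · have hc1 : Abelianization.of c = 1 := (QuotientGroup.eq_one_iff c).mpr hc
      show Abelianization.of (a * c⁻¹) = Abelianization.of a
      rw [map_mul, map_inv, hc1]; group
  · rintro ⟨k, hk, hka⟩
    have : Abelianization.map g (Abelianization.of k) = 1 := by
      rw [Abelianization.map_of, hk, map_one]
    rw [← hka]
    exact this

end Aux

theorem stmt6 {Γ Δ : Type u} [Group Γ] [Group Δ] (f : Γ →* Δ)
    (hf : Function.Surjective f)
    [FiniteDimensional ℚ (QH1 Γ)] [FiniteDimensional ℚ (QH1 Δ)]
    (Δ' : Subgroup Δ) [Δ'.FiniteIndex] :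
    (Δ'.comap f).FiniteIndex ∧
      Module.rank ℚ (QH1 Δ') + Module.rank ℚ (QH1 Γ) ≤
        Module.rank ℚ (QH1 (Δ'.comap f)) + Module.rank ℚ (QH1 Δ) := by
  have hidx : (Δ'.comap f).FiniteIndex := by
    constructor
    rw [Subgroup.index_comap_of_surjective _ hf]
    exact Subgroup.FiniteIndex.index_ne_zero
  refine ⟨hidx, ?_⟩
  set Γ' := Δ'.comap f with hΓ'
  let i : Γ' →* Γ := Γ'.subtype
  let f' : Γ' →* Δ' := f.subgroupComap Δ'
  -- surjectivity of the restricted map and of its induced map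
  have hf' : Function.Surjective f' := by
    rintro ⟨d, hd⟩
    obtain ⟨g, rfl⟩ := hf d
    exact ⟨⟨g, hd⟩, rfl⟩
  have hsurj : Function.Surjective (inducedMap f') := by
    have h1 : Function.Surjective (Abelianization.map f') := abmap_surjective f' hf'
    have h2 : Function.Surjective
        ((MonoidHom.toAdditive (Abelianization.map f')).toIntLinearMap) := h1
    have h3 := LinearMap.lTensor_surjective (Q := ℚ) h2
    show Function.Surjective
      ⇑(LinearMap.baseChange ℚ (MonoidHom.toAdditive (Abelianization.map f')).toIntLinearMap)
    rw [LinearMap.baseChange_eq_ltensor]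
    exact h3
  -- the ℤ-linear map underlying `inducedMap f`
  set Lf := (MonoidHom.toAdditive (Abelianization.map f)).toIntLinearMap with hLf
  -- the span of the images of `ker f`
  set S : Submodule ℚ (QH1 Γ) := Submodule.span ℚ
    (Set.range fun k : f.ker => (1 : ℚ) ⊗ₜ[ℤ] Additive.ofMul (Abelianization.of (k : Γ))) with hS
  -- every element of the image of ℚ ⊗ ker Lf lies in S
  have himg : ∀ y : ℚ ⊗[ℤ] (LinearMap.ker Lf),
      ((LinearMap.ker Lf).subtype.lTensor ℚ) y ∈ S := by
    intro y
    induction y using TensorProduct.induction_on with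
    | zero => rw [map_zero]; exact S.zero_mem
    | tmul q n =>
      rw [LinearMap.lTensor_tmul]
      have hn : Abelianization.map f (Additive.toMul n.1) = 1 := n.2
      have hn' : Additive.toMul n.1 ∈ (Abelianization.map f).ker := hn
      rw [abmap_ker f hf, Subgroup.mem_map] at hn'
      obtain ⟨k, hk, hka⟩ := hn'
      have hgen : (1 : ℚ) ⊗ₜ[ℤ] ((LinearMap.ker Lf).subtype n) ∈ S := by
        apply Submodule.subset_span
        refine ⟨⟨k, hk⟩, ?_⟩
        have hka' : Additive.ofMul (Abelianization.of k)
            = (n.1 : Additive (Abelianization Γ)) := hka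
        show (1 : ℚ) ⊗ₜ[ℤ] Additive.ofMul (Abelianization.of k)
          = (1 : ℚ) ⊗ₜ[ℤ] ((LinearMap.ker Lf).subtype n)
        rw [hka']
        rfl
      have : q ⊗ₜ[ℤ] ((LinearMap.ker Lf).subtype n)
          = q • ((1 : ℚ) ⊗ₜ[ℤ] ((LinearMap.ker Lf).subtype n)) := by
        rw [TensorProduct.smul_tmul', smul_eq_mul, mul_one]
      rw [this]
      exact S.smul_mem q hgen
    | add a b ha hb => rw [map_add]; exact S.add_mem ha hb
  -- kernel of the induced map is contained in S (uses flatness of ℚ)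
  have hker_le : LinearMap.ker (inducedMap f) ≤ S := by
    intro x hx
    have hexact := Module.Flat.lTensor_exact ℚ (LinearMap.exact_subtype_ker_map Lf)
    have hx' : (Lf.lTensor ℚ) x = 0 := by
      have hx0 : inducedMap f x = 0 := hx
      rw [show (Lf.lTensor ℚ) x = inducedMap f x by
        show _ = (LinearMap.baseChange ℚ Lf) x
        rw [show ⇑(LinearMap.baseChange ℚ Lf) = ⇑(Lf.lTensor ℚ) from
          LinearMap.baseChange_eq_ltensor Lf]]
      exact hx0
    obtain ⟨y, rfl⟩ := (hexact x).mp hx'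
    exact himg y
  -- S lifts into the kernel of the induced map of f'
  have hS_le : S ≤ Submodule.map (inducedMap i) (LinearMap.ker (inducedMap f')) := by
    rw [hS, Submodule.span_le]
    rintro _ ⟨k, rfl⟩
    have hkΓ' : (k : Γ) ∈ Γ' := by
      have hk1 : f (k : Γ) = 1 := k.2
      show f (k : Γ) ∈ Δ'
      rw [hk1]; exact Δ'.one_mem
    refine ⟨(1 : ℚ) ⊗ₜ[ℤ] Additive.ofMul (Abelianization.of (⟨(k : Γ), hkΓ'⟩ : Γ')), ?_, ?_⟩
    · show (LinearMap.baseChange ℚ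
        (MonoidHom.toAdditive (Abelianization.map f')).toIntLinearMap) _ = 0
      rw [LinearMap.baseChange_tmul]
      have : f' (⟨(k : Γ), hkΓ'⟩ : Γ') = 1 := by
        ext
        show f (k : Γ) = 1
        exact k.2
      show (1 : ℚ) ⊗ₜ[ℤ]
        (Additive.ofMul (Abelianization.map f' (Abelianization.of (⟨(k : Γ), hkΓ'⟩ : Γ')))) = 0
      rw [Abelianization.map_of, this, map_one]
      show (1 : ℚ) ⊗ₜ[ℤ] (0 : Additive (Abelianization Δ')) = 0
      rw [TensorProduct.tmul_zero]
    · show (LinearMap.baseChange ℚ _) _ = _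
      rw [LinearMap.baseChange_tmul]
      rfl
  -- rank computations
  have h1 : Module.rank ℚ (QH1 Γ) ≤ Module.rank ℚ (QH1 Δ) + Module.rank ℚ S := by
    rw [← LinearMap.rank_range_add_rank_ker (inducedMap f)]
    exact add_le_add (Submodule.rank_le _) (Submodule.rank_mono hker_le)
  have h2 : Module.rank ℚ S ≤ Module.rank ℚ (LinearMap.ker (inducedMap f')) :=
    (Submodule.rank_mono hS_le).trans (rank_map_le _ _)
  have h3 : Module.rank ℚ (QH1 Γ') =
      Module.rank ℚ (QH1 Δ') + Module.rank ℚ (LinearMap.ker (inducedMap f')) :=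
    LinearMap.rank_eq_of_surjective hsurj
  calc Module.rank ℚ (QH1 Δ') + Module.rank ℚ (QH1 Γ)
      ≤ Module.rank ℚ (QH1 Δ') + (Module.rank ℚ (QH1 Δ) + Module.rank ℚ S) :=
        add_le_add le_rfl h1
    _ ≤ Module.rank ℚ (QH1 Δ') +
        (Module.rank ℚ (QH1 Δ) + Module.rank ℚ (LinearMap.ker (inducedMap f'))) :=
        add_le_add le_rfl (add_le_add le_rfl h2)
    _ = (Module.rank ℚ (QH1 Δ') + Module.rank ℚ (LinearMap.ker (inducedMap f'))) +
        Module.rank ℚ (QH1 Δ) := by ring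
    _ = Module.rank ℚ (QH1 Γ') + Module.rank ℚ (QH1 Δ) := by rw [← h3]
end

section
/- Let G be a group such that ℚ ⊗_ℤ G^{ab} is finite-dimensional, let f be an automorphism of G, and let G ⋊_f ℤ be the semidirect product determined by the homomorphism ℤ → Aut(G) sending 1 to f. Then b₁(G ⋊_f ℤ) = 1 + dim_ℚ ker(f_* − id), where f_* is the ℚ-linear automorphism of ℚ ⊗_ℤ G^{ab} induced by f; that is, the first Betti number of the mapping-torus group equals 1 plus the dimension of the subspace of ℚ ⊗_ℤ G^{ab} fixed by f_*. -/
open scoped TensorProduct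

namespace Stmt7Aux
open SemidirectProduct

variable {G : Type*} [Group G] (f : MulAut G)

abbrev K := SemidirectProduct G (Multiplicative ℤ) (zpowersHom (MulAut G) f)

abbrev A (G : Type*) [Group G] := Additive (Abelianization G)

/-- the induced endomorphism of the abelianization, as ℤ-linear map -/
noncomputable def aLin : A G →ₗ[ℤ] A G :=
  (MonoidHom.toAdditive (Abelianization.map f.toMonoidHom)).toIntLinearMap

noncomputable def delta : A G →ₗ[ℤ] A G := aLin f - LinearMap.id

noncomputable def N : Submodule ℤ (A G) := LinearMap.range (delta f)

lemma mkQ_of_apply (g : G) :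
    (N f).mkQ (Additive.ofMul (Abelianization.of (f g))) =
      (N f).mkQ (Additive.ofMul (Abelianization.of g)) := by
  rw [Submodule.mkQ_apply, Submodule.mkQ_apply, Submodule.Quotient.eq]
  exact ⟨Additive.ofMul (Abelianization.of g), rfl⟩

lemma mkQ_of_zpow (n : ℤ) (g : G) :
    (N f).mkQ (Additive.ofMul (Abelianization.of ((f ^ n) g))) =
      (N f).mkQ (Additive.ofMul (Abelianization.of g)) := by
  induction n using Int.induction_on generalizing g with
  | zero => simp
  | succ n ih =>
      have : ((f ^ ((n : ℤ) + 1)) g) = (f ^ (n : ℤ)) (f g) := by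
        rw [zpow_add_one]; rfl
      rw [this, ih (f g), mkQ_of_apply]
  | pred n ih =>
      have : ((f ^ (-(n : ℤ) - 1)) g) = (f ^ (-(n : ℤ))) (f⁻¹ g) := by
        rw [sub_eq_add_neg, zpow_add, zpow_neg_one]; rfl
      rw [this, ih (f⁻¹ g)]
      have := mkQ_of_apply f (f⁻¹ g)
      rw [MulAut.apply_inv_self] at this
      rw [this]


/-- first component map `G →* Multiplicative ((A G ⧸ N f) × ℤ)` -/
noncomputable def f1 : G →* Multiplicative ((A G ⧸ N f) × ℤ) where
  toFun g := Multiplicative.ofAdd ((N f).mkQ (Additive.ofMul (Abelianization.of g)), 0)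
  map_one' := by
    simp only [map_one]
    rfl
  map_mul' g h := by
    simp only [map_mul]
    rfl

noncomputable def f2 : Multiplicative ℤ →* Multiplicative ((A G ⧸ N f) × ℤ) where
  toFun n := Multiplicative.ofAdd (0, n.toAdd)
  map_one' := rfl
  map_mul' n m := by
    apply congrArg Multiplicative.ofAdd
    apply Prod.ext <;> simp

noncomputable def theta : K f →* Multiplicative ((A G ⧸ N f) × ℤ) :=
  SemidirectProduct.lift (f1 f) (f2 f) (by
    intro h
    ext1 g
    simp only [MonoidHom.comp_apply, MulEquiv.coe_toMonoidHom, MulAut.conj_apply]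
    have hcomm : ∀ x y : Multiplicative ((A G ⧸ N f) × ℤ), x * y * x⁻¹ = y := by
      intro x y; rw [mul_comm x y, mul_assoc, mul_inv_cancel, mul_one]
    rw [hcomm]
    show f1 f ((zpowersHom (MulAut G) f h) g) = f1 f g
    rw [zpowersHom_apply]
    show Multiplicative.ofAdd ((N f).mkQ (Additive.ofMul (Abelianization.of ((f ^ h.toAdd) g))), 0) = _
    rw [mkQ_of_zpow]
    rfl)

noncomputable def theta' : Additive (Abelianization (K f)) →+ (A G ⧸ N f) × ℤ :=
  MonoidHom.toAdditiveLeft (Abelianization.lift (theta f))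

/-- the map induced by `inl`. -/
noncomputable def j : A G →ₗ[ℤ] Additive (Abelianization (K f)) :=
  (MonoidHom.toAdditive (Abelianization.map (inl : G →* K f))).toIntLinearMap

lemma of_conj (k l : K f) :
    Abelianization.of (k * l * k⁻¹) = Abelianization.of l := by
  rw [map_mul, map_mul, map_inv, mul_comm (Abelianization.of k), mul_assoc,
    mul_inv_cancel, mul_one]

lemma j_aLin (x : A G) : j f (aLin f x) = j f x := by
  obtain ⟨g, rfl⟩ : ∃ g : G, Additive.ofMul (Abelianization.of g) = x := by
    induction x using QuotientGroup.induction_on with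
    | H g => exact ⟨g, rfl⟩
  show j f (Additive.ofMul (Abelianization.map f.toMonoidHom (Abelianization.of g))) = _
  rw [Abelianization.map_of]
  show Additive.ofMul (Abelianization.map inl (Abelianization.of (f g))) =
    Additive.ofMul (Abelianization.map inl (Abelianization.of g))
  rw [Abelianization.map_of, Abelianization.map_of]
  have hf : (f : MulAut G) g = (zpowersHom (MulAut G) f (Multiplicative.ofAdd 1)) g := by
    rw [zpowersHom_apply]
    norm_num
  rw [hf, SemidirectProduct.inl_aut, map_inv, of_conj]

lemma N_le_ker : N f ≤ LinearMap.ker (j f) := by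
  rintro x ⟨y, rfl⟩
  simp only [LinearMap.mem_ker, delta, LinearMap.sub_apply, LinearMap.id_apply, map_sub]
  rw [j_aLin, sub_self]

noncomputable def jbar : (A G ⧸ N f) →ₗ[ℤ] Additive (Abelianization (K f)) :=
  Submodule.liftQ (N f) (j f) (N_le_ker f)

noncomputable def z0 : Additive (Abelianization (K f)) :=
  Additive.ofMul (Abelianization.of (inr (Multiplicative.ofAdd 1)))

noncomputable def psi : ((A G ⧸ N f) × ℤ) →ₗ[ℤ] Additive (Abelianization (K f)) :=
  LinearMap.coprod (jbar f) (LinearMap.toSpanSingleton ℤ _ (z0 f))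


lemma theta'_j (g : G) :
    theta' f (j f (Additive.ofMul (Abelianization.of g))) =
      ((N f).mkQ (Additive.ofMul (Abelianization.of g)), 0) := by
  show (Abelianization.lift (theta f)
      (Abelianization.map inl (Abelianization.of g))).toAdd = _
  rw [Abelianization.map_of, Abelianization.lift_apply_of]
  show (theta f (inl g)).toAdd = _
  rw [theta, SemidirectProduct.lift_inl]
  rfl

lemma theta'_z0 : theta' f (z0 f) = (0, 1) := by
  show (Abelianization.lift (theta f)
      (Abelianization.of (inr (Multiplicative.ofAdd 1)))).toAdd = _
  rw [Abelianization.lift_apply_of, theta, SemidirectProduct.lift_inr]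
  rfl

lemma right_inv_aux (p : (A G ⧸ N f) × ℤ) : theta' f (psi f p) = p := by
  obtain ⟨q, n⟩ := p
  obtain ⟨x, rfl⟩ := Submodule.Quotient.mk_surjective (N f) q
  obtain ⟨g, rfl⟩ : ∃ g : G, Additive.ofMul (Abelianization.of g) = x := by
    induction x using QuotientGroup.induction_on with
    | H g => exact ⟨g, rfl⟩
  have hpsi : psi f (Submodule.Quotient.mk (Additive.ofMul (Abelianization.of g)), n) =
      j f (Additive.ofMul (Abelianization.of g)) + n • z0 f := by
    simp only [psi, LinearMap.coprod_apply, LinearMap.toSpanSingleton_apply]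
    congr 1
  rw [hpsi, map_add, AddMonoidHom.map_zsmul, theta'_j, theta'_z0]
  ext
  · show (N f).mkQ _ + n • (0 : A G ⧸ N f) = _
    simp [Submodule.mkQ_apply]
  · show (0 : ℤ) + n • (1 : ℤ) = n
    simp

lemma left_inv_aux (x : Additive (Abelianization (K f))) : psi f (theta' f x) = x := by
  obtain ⟨k, hk⟩ : ∃ k : K f, Abelianization.of k = x.toMul :=
    QuotientGroup.induction_on x.toMul fun k => ⟨k, rfl⟩
  obtain ⟨k, rfl⟩ : ∃ k : K f, Additive.ofMul (Abelianization.of k) = x :=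
    ⟨k, by rw [hk]; exact Equiv.apply_symm_apply Additive.ofMul x⟩
  have htheta : theta f k = Multiplicative.ofAdd
      ((N f).mkQ (Additive.ofMul (Abelianization.of k.left)), k.right.toAdd) := by
    rw [← SemidirectProduct.inl_left_mul_inr_right k, map_mul, theta,
      SemidirectProduct.lift_inl, SemidirectProduct.lift_inr,
      SemidirectProduct.inl_left_mul_inr_right k]
    show Multiplicative.ofAdd _ * Multiplicative.ofAdd _ = _
    rw [← ofAdd_add]
    congr 1
    ext
    · show (N f).mkQ _ + 0 = _; rw [add_zero]
    · show 0 + k.right.toAdd = _; rw [zero_add]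
  have hth : theta' f (Additive.ofMul (Abelianization.of k)) =
      ((N f).mkQ (Additive.ofMul (Abelianization.of k.left)), k.right.toAdd) := by
    show (Abelianization.lift (theta f) (Abelianization.of k)).toAdd = _
    rw [Abelianization.lift_apply_of, htheta]
    rfl
  rw [hth]
  simp only [psi, LinearMap.coprod_apply, LinearMap.toSpanSingleton_apply]
  rw [Submodule.mkQ_apply, jbar, Submodule.liftQ_apply]
  have hj : j f (Additive.ofMul (Abelianization.of k.left)) =
      Additive.ofMul (Abelianization.of (inl k.left)) := by
    show Additive.ofMul (Abelianization.map inl (Abelianization.of k.left)) = _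
    rw [Abelianization.map_of]
  have hz : k.right.toAdd • z0 f = Additive.ofMul (Abelianization.of (inr k.right)) := by
    rw [z0, ← ofMul_zpow, ← map_zpow, ← map_zpow, ← ofAdd_zsmul, smul_eq_mul, mul_one,
      ofAdd_toAdd]
  rw [hj, hz, ← ofMul_mul, ← map_mul, SemidirectProduct.inl_left_mul_inr_right]


noncomputable def e : Additive (Abelianization (K f)) ≃+ (A G ⧸ N f) × ℤ where
  toFun := theta' f
  invFun := psi f
  left_inv := left_inv_aux f
  right_inv := right_inv_aux f
  map_add' := (theta' f).map_add

end Stmt7Aux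

theorem stmt7 {G : Type*} [Group G] [FiniteDimensional ℚ (QH1 G)] (f : MulAut G) :
    Module.finrank ℚ
        (QH1 (SemidirectProduct G (Multiplicative ℤ) (zpowersHom (MulAut G) f))) =
      1 + Module.finrank ℚ
        (LinearMap.ker (inducedMap (f : MulAut G).toMonoidHom - LinearMap.id)) := by
  classical
  set T : QH1 G →ₗ[ℚ] QH1 G := inducedMap (f : MulAut G).toMonoidHom - LinearMap.id with hTdef
  have hbc : LinearMap.baseChange ℚ (Stmt7Aux.delta f) = T := by
    rw [Stmt7Aux.delta, LinearMap.baseChange_sub, LinearMap.baseChange_id]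
    rfl
  have hTfun : ⇑T = ⇑(LinearMap.lTensor ℚ (Stmt7Aux.delta f)) := by
    rw [← hbc]
    exact LinearMap.baseChange_eq_ltensor _
  set πQ : QH1 G →ₗ[ℚ] ℚ ⊗[ℤ] (Stmt7Aux.A G ⧸ Stmt7Aux.N f) :=
    LinearMap.baseChange ℚ (Stmt7Aux.N f).mkQ with hπdef
  have hπfun : ⇑πQ = ⇑(LinearMap.lTensor ℚ (Stmt7Aux.N f).mkQ) :=
    LinearMap.baseChange_eq_ltensor _
  have hsurj : Function.Surjective πQ := by
    rw [hπfun]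
    exact LinearMap.lTensor_surjective ℚ (Submodule.mkQ_surjective _)
  have hex : Function.Exact (LinearMap.lTensor ℚ (Stmt7Aux.delta f))
      (LinearMap.lTensor ℚ (Stmt7Aux.N f).mkQ) :=
    lTensor_exact ℚ (LinearMap.exact_map_mkQ_range (Stmt7Aux.delta f))
      (Submodule.mkQ_surjective _)
  have hker : LinearMap.ker πQ = LinearMap.range T := by
    ext x
    have h1 := hex x
    simp only [LinearMap.mem_ker, LinearMap.mem_range, Set.mem_range] at h1 ⊢
    constructor
    · intro hx
      obtain ⟨y, hy⟩ := h1.mp (by rw [← congrFun hπfun x]; exact hx)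
      exact ⟨y, by rw [congrFun hTfun y]; exact hy⟩
    · rintro ⟨y, rfl⟩
      rw [congrFun hπfun _]
      exact h1.mpr ⟨y, by rw [← congrFun hTfun y]⟩
  have E4 : (ℚ ⊗[ℤ] (Stmt7Aux.A G ⧸ Stmt7Aux.N f)) ≃ₗ[ℚ]
      (QH1 G ⧸ LinearMap.range T) :=
    (LinearMap.quotKerEquivOfSurjective πQ hsurj).symm.trans
      (Submodule.quotEquivOfEq _ _ hker)
  have E1 : QH1 (Stmt7Aux.K f) ≃ₗ[ℤ]
      ℚ ⊗[ℤ] ((Stmt7Aux.A G ⧸ Stmt7Aux.N f) × ℤ) :=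
    TensorProduct.congr (LinearEquiv.refl ℤ ℚ) (Stmt7Aux.e f).toIntLinearEquiv
  have E2 := TensorProduct.prodRight ℤ ℚ ℚ (Stmt7Aux.A G ⧸ Stmt7Aux.N f) ℤ
  have Etot : QH1 (Stmt7Aux.K f) ≃+ (QH1 G ⧸ LinearMap.range T) × ℚ :=
    E1.toAddEquiv.trans (E2.toAddEquiv.trans
      (AddEquiv.prodCongr E4.toAddEquiv (TensorProduct.rid ℤ ℚ).toAddEquiv))
  have EL : QH1 (Stmt7Aux.K f) ≃ₗ[ℚ] (QH1 G ⧸ LinearMap.range T) × ℚ :=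
    { Etot with map_smul' := fun c x => map_rat_smul Etot.toAddMonoidHom c x }
  have h5 : Module.finrank ℚ
      (QH1 (SemidirectProduct G (Multiplicative ℤ) (zpowersHom (MulAut G) f))) =
      Module.finrank ℚ ((QH1 G ⧸ LinearMap.range T) × ℚ) := EL.finrank_eq
  rw [h5, Module.finrank_prod, Module.finrank_self]
  have h6 := Submodule.finrank_quotient_add_finrank (LinearMap.range T)
  have h7 := LinearMap.finrank_range_add_finrank_ker T
  omega
end

section
/- The subgroup of SL(2,ℤ) generated by the matrices [[1,0],[4,1]] and [[1,1],[0,1]] has finite index in SL(2,ℤ). -/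
/-- The matrix [[1,0],[4,1]] as an element of SL(2,ℤ). -/
def A84 : Matrix.SpecialLinearGroup (Fin 2) ℤ :=
  ⟨!![1, 0; 4, 1], by norm_num [Matrix.det_fin_two_of]⟩

/-- The matrix [[1,1],[0,1]] as an element of SL(2,ℤ). -/
def B8 : Matrix.SpecialLinearGroup (Fin 2) ℤ :=
  ⟨!![1, 1; 0, 1], by norm_num [Matrix.det_fin_two_of]⟩

private lemma B8_zpow (n : ℤ) :
    ((B8 ^ n : Matrix.SpecialLinearGroup (Fin 2) ℤ) : Matrix (Fin 2) (Fin 2) ℤ)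
      = !![1, n; 0, 1] := by
  have hBinv : ((B8⁻¹ : Matrix.SpecialLinearGroup (Fin 2) ℤ) : Matrix (Fin 2) (Fin 2) ℤ)
      = !![1, -1; 0, 1] := by
    have h : B8⁻¹ = (⟨!![1, -1; 0, 1], by norm_num [Matrix.det_fin_two_of]⟩ :
        Matrix.SpecialLinearGroup (Fin 2) ℤ) := by
      symm
      apply eq_inv_of_mul_eq_one_left
      apply Subtype.ext
      show !![1, -1; 0, 1] * !![1, 1; 0, 1] = _
      rw [Matrix.mul_fin_two, Matrix.SpecialLinearGroup.coe_one, Matrix.one_fin_two]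
      norm_num
    rw [h]
  induction n using Int.induction_on with
  | zero => simp [Matrix.SpecialLinearGroup.coe_one, Matrix.one_fin_two]
  | succ i ih =>
      rw [zpow_add_one, Matrix.SpecialLinearGroup.coe_mul, ih]
      show _ * (!![1, 1; 0, 1] : Matrix (Fin 2) (Fin 2) ℤ) = _
      rw [Matrix.mul_fin_two]
      norm_num
      ring_nf
  | pred i ih =>
      rw [zpow_sub_one, Matrix.SpecialLinearGroup.coe_mul, ih, hBinv, Matrix.mul_fin_two]
      norm_num
      ring_nf

private lemma A84_zpow (n : ℤ) :
    ((A84 ^ n : Matrix.SpecialLinearGroup (Fin 2) ℤ) : Matrix (Fin 2) (Fin 2) ℤ)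
      = !![1, 0; 4 * n, 1] := by
  have hAinv : ((A84⁻¹ : Matrix.SpecialLinearGroup (Fin 2) ℤ) : Matrix (Fin 2) (Fin 2) ℤ)
      = !![1, 0; -4, 1] := by
    have h : A84⁻¹ = (⟨!![1, 0; -4, 1], by norm_num [Matrix.det_fin_two_of]⟩ :
        Matrix.SpecialLinearGroup (Fin 2) ℤ) := by
      symm
      apply eq_inv_of_mul_eq_one_left
      apply Subtype.ext
      show !![1, 0; -4, 1] * !![1, 0; 4, 1] = _
      rw [Matrix.mul_fin_two, Matrix.SpecialLinearGroup.coe_one, Matrix.one_fin_two]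
      norm_num
    rw [h]
  induction n using Int.induction_on with
  | zero => simp [Matrix.SpecialLinearGroup.coe_one, Matrix.one_fin_two]
  | succ i ih =>
      rw [zpow_add_one, Matrix.SpecialLinearGroup.coe_mul, ih]
      show _ * (!![1, 0; 4, 1] : Matrix (Fin 2) (Fin 2) ℤ) = _
      rw [Matrix.mul_fin_two]
      norm_num
      ring
  | pred i ih =>
      rw [zpow_sub_one, Matrix.SpecialLinearGroup.coe_mul, ih, hAinv, Matrix.mul_fin_two]
      norm_num
      ring

private lemma helper1pos (a c : ℤ) (hc : 0 < c) (ha : Odd a) (h4 : 4 ∣ c) :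
    ∃ q, 2 * |a - q * c| < c := by
  obtain ⟨u, hu⟩ := ha
  obtain ⟨t, ht⟩ := h4
  have h1 : 0 ≤ a % c := Int.emod_nonneg a hc.ne'
  have h2 : a % c < c := Int.emod_lt_of_pos a hc
  have h3 : a - a / c * c = a % c := by rw [Int.emod_def]; ring
  have h5 : a % c = a - 4 * (a / c * t) := by rw [← h3, ht]; ring
  by_cases hlt : 2 * (a % c) < c
  · exact ⟨a / c, by rw [h3, abs_of_nonneg h1]; omega⟩
  · refine ⟨a / c + 1, ?_⟩
    have h6 : a - (a / c + 1) * c = a % c - c := by rw [← h3]; ring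
    rw [h6, abs_of_nonpos (by omega)]
    omega

private lemma helper1 (a c : ℤ) (hc : c ≠ 0) (ha : Odd a) (h4 : 4 ∣ c) :
    ∃ q, 2 * |a - q * c| < |c| := by
  rcases hc.lt_or_gt with hneg | hpos
  · obtain ⟨q, hq⟩ := helper1pos a (-c) (by omega) ha ⟨-(h4.choose), by have := h4.choose_spec; omega⟩
    refine ⟨-q, ?_⟩
    rw [abs_of_neg hneg]
    convert hq using 2
    ring
  · obtain ⟨q, hq⟩ := helper1pos a c hpos ha h4
    exact ⟨q, by rwa [abs_of_pos hpos]⟩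

private lemma helper2pos (c a : ℤ) (ha : 0 < a) : ∃ k, |c - 4 * k * a| ≤ 2 * a := by
  have h4a : 0 < 4 * a := by omega
  have h1 : 0 ≤ c % (4 * a) := Int.emod_nonneg c h4a.ne'
  have h2 : c % (4 * a) < 4 * a := Int.emod_lt_of_pos c h4a
  have h3 : c - c / (4 * a) * (4 * a) = c % (4 * a) := by rw [Int.emod_def]; ring
  by_cases hlt : c % (4 * a) ≤ 2 * a
  · refine ⟨c / (4 * a), ?_⟩
    have : c - 4 * (c / (4 * a)) * a = c % (4 * a) := by rw [← h3]; ring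
    rw [this, abs_of_nonneg h1]; omega
  · refine ⟨c / (4 * a) + 1, ?_⟩
    have : c - 4 * (c / (4 * a) + 1) * a = c % (4 * a) - 4 * a := by rw [← h3]; ring
    rw [this, abs_of_nonpos (by omega)]; omega

private lemma helper2 (c a : ℤ) (ha : a ≠ 0) : ∃ k, |c - 4 * k * a| ≤ 2 * |a| := by
  rcases ha.lt_or_gt with hneg | hpos
  · obtain ⟨k, hk⟩ := helper2pos c (-a) (by omega)
    refine ⟨-k, ?_⟩
    rw [abs_of_neg hneg]
    convert hk using 2
    ring
  · obtain ⟨k, hk⟩ := helper2pos c a hpos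
    exact ⟨k, by rwa [abs_of_pos hpos]⟩

private lemma key : ∀ n : ℕ, ∀ g : Matrix.SpecialLinearGroup (Fin 2) ℤ,
    ((g : Matrix (Fin 2) (Fin 2) ℤ) 1 0).natAbs = n →
    (4 : ℤ) ∣ ((g : Matrix (Fin 2) (Fin 2) ℤ) 0 0 - 1) →
    (4 : ℤ) ∣ ((g : Matrix (Fin 2) (Fin 2) ℤ) 1 0) →
    g ∈ Subgroup.closure ({A84, B8} : Set (Matrix.SpecialLinearGroup (Fin 2) ℤ)) := by
  intro n
  induction n using Nat.strong_induction_on with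
  | _ n IH =>
    intro g hn ha hc
    have hA : A84 ∈ Subgroup.closure ({A84, B8} : Set (Matrix.SpecialLinearGroup (Fin 2) ℤ)) :=
      Subgroup.subset_closure (by simp)
    have hB : B8 ∈ Subgroup.closure ({A84, B8} : Set (Matrix.SpecialLinearGroup (Fin 2) ℤ)) :=
      Subgroup.subset_closure (by simp)
    set a := (g : Matrix (Fin 2) (Fin 2) ℤ) 0 0 with ha_def
    set b := (g : Matrix (Fin 2) (Fin 2) ℤ) 0 1 with hb_def
    set c := (g : Matrix (Fin 2) (Fin 2) ℤ) 1 0 with hc_def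
    set d := (g : Matrix (Fin 2) (Fin 2) ℤ) 1 1 with hd_def
    have hgmat : (g : Matrix (Fin 2) (Fin 2) ℤ) = !![a, b; c, d] :=
      Matrix.eta_fin_two _
    have hdet : a * d - b * c = 1 := by
      have h := g.2
      rw [Matrix.det_fin_two] at h
      exact h
    by_cases hc0 : c = 0
    · -- then a = d = 1 and g = B8 ^ b
      have had : a * d = 1 := by rw [hc0] at hdet; linarith
      rcases Int.eq_one_or_neg_one_of_mul_eq_one' had with ⟨ha1, hd1⟩ | ⟨ha1, hd1⟩
      · have : g = B8 ^ b := by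
          apply Subtype.ext
          rw [B8_zpow, hgmat, ha1, hd1, hc0]
        rw [this]
        exact zpow_mem hB b
      · exfalso; rw [ha1] at ha; omega
    · -- reduction step
      have haodd : Odd a := by
        obtain ⟨m, hm⟩ := ha
        exact ⟨2 * m, by omega⟩
      obtain ⟨q, hq⟩ := helper1 a c hc0 haodd hc
      have ha1ne : a - q * c ≠ 0 := by
        intro h
        obtain ⟨u, hu⟩ := haodd
        obtain ⟨t, ht⟩ := hc
        have : a - 4 * (q * t) = 0 := by rw [← h, ht]; ring
        omega
      obtain ⟨k, hk⟩ := helper2 c (a - q * c) ha1ne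
      set g₂ : Matrix.SpecialLinearGroup (Fin 2) ℤ := A84 ^ (-k) * (B8 ^ (-q) * g) with hg₂
      have hmat : (g₂ : Matrix (Fin 2) (Fin 2) ℤ)
          = !![a - q * c, b - q * d;
               c - 4 * k * (a - q * c), d - 4 * k * (b - q * d)] := by
        rw [hg₂, Matrix.SpecialLinearGroup.coe_mul, Matrix.SpecialLinearGroup.coe_mul,
          A84_zpow, B8_zpow, hgmat, Matrix.mul_fin_two, Matrix.mul_fin_two]
        congr 1 <;> ring_nf
      have hg₂10 : (g₂ : Matrix (Fin 2) (Fin 2) ℤ) 1 0 = c - 4 * k * (a - q * c) := by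
        rw [hmat]; simp
      have hg₂00 : (g₂ : Matrix (Fin 2) (Fin 2) ℤ) 0 0 = a - q * c := by
        rw [hmat]; simp
      have hlt : |c - 4 * k * (a - q * c)| < |c| := lt_of_le_of_lt hk (by omega)
      have hmem₂ : g₂ ∈ Subgroup.closure ({A84, B8} : Set (Matrix.SpecialLinearGroup (Fin 2) ℤ)) := by
        apply IH ((g₂ : Matrix (Fin 2) (Fin 2) ℤ) 1 0).natAbs _ g₂ rfl
        · -- 4 ∣ a - q * c - 1
          rw [hg₂00]
          obtain ⟨t, ht⟩ := hc
          obtain ⟨m, hm⟩ := ha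
          exact ⟨m - q * t, by rw [ht]; ring_nf; omega⟩
        · rw [hg₂10]
          obtain ⟨t, ht⟩ := hc
          exact ⟨t - k * (a - q * c), by rw [ht]; ring⟩
        · -- natAbs decreasing
          rw [hg₂10, ← hn]
          have h1 := Int.abs_eq_natAbs (c - 4 * k * (a - q * c))
          have h2 := Int.abs_eq_natAbs c
          omega
      have hEq : g = B8 ^ q * (A84 ^ k * g₂) := by
        rw [hg₂]
        group
      rw [hEq]
      exact mul_mem (zpow_mem hB q) (mul_mem (zpow_mem hA k) hmem₂)

theorem stmt8 : (Subgroup.closure ({A84, B8} : Set (Matrix.SpecialLinearGroup (Fin 2) ℤ))).FiniteIndex := by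
  set φ : Matrix.SpecialLinearGroup (Fin 2) ℤ →* Matrix.SpecialLinearGroup (Fin 2) (ZMod 4) :=
    Matrix.SpecialLinearGroup.map (Int.castRingHom (ZMod 4)) with hφ
  have hker : φ.ker ≤ Subgroup.closure ({A84, B8} : Set (Matrix.SpecialLinearGroup (Fin 2) ℤ)) := by
    intro g hg
    have hcoe : ((g : Matrix (Fin 2) (Fin 2) ℤ)).map (Int.castRingHom (ZMod 4))
        = (1 : Matrix (Fin 2) (Fin 2) (ZMod 4)) := by
      have h : φ g = 1 := hg
      have := congrArg (fun M : Matrix.SpecialLinearGroup (Fin 2) (ZMod 4) =>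
        (M : Matrix (Fin 2) (Fin 2) (ZMod 4))) h
      simpa [hφ, Matrix.SpecialLinearGroup.map_apply_coe] using this
    have h00 : (((g : Matrix (Fin 2) (Fin 2) ℤ) 0 0 : ℤ) : ZMod 4) = 1 := by
      have := congrFun (congrFun hcoe 0) 0
      simpa [Matrix.map_apply] using this
    have h10 : (((g : Matrix (Fin 2) (Fin 2) ℤ) 1 0 : ℤ) : ZMod 4) = 0 := by
      have := congrFun (congrFun hcoe 1) 0
      simpa [Matrix.map_apply] using this
    apply key ((g : Matrix (Fin 2) (Fin 2) ℤ) 1 0).natAbs g rfl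
    · have : (((g : Matrix (Fin 2) (Fin 2) ℤ) 0 0 - 1 : ℤ) : ZMod 4) = 0 := by
        push_cast
        rw [h00]; ring
      exact_mod_cast (ZMod.intCast_zmod_eq_zero_iff_dvd _ 4).mp this
    · exact_mod_cast (ZMod.intCast_zmod_eq_zero_iff_dvd _ 4).mp h10
  have : φ.ker.FiniteIndex := Subgroup.finiteIndex_ker φ
  exact Subgroup.finiteIndex_of_le hker
end

section
/- The subgroup of SL(2,ℤ) generated by the matrices [[1,0],[2,1]] and [[1,2],[0,1]] is contained in the kernel of the reduction homomorphism SL(2,ℤ) → SL(2,ℤ/2ℤ), and has finite index in SL(2,ℤ). -/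
/-- The matrix [[1,0],[2,1]] as an element of SL(2,ℤ). -/
def A92 : Matrix.SpecialLinearGroup (Fin 2) ℤ :=
  ⟨!![1, 0; 2, 1], by norm_num [Matrix.det_fin_two_of]⟩

/-- The matrix [[1,2],[0,1]] as an element of SL(2,ℤ). -/
def B92 : Matrix.SpecialLinearGroup (Fin 2) ℤ :=
  ⟨!![1, 2; 0, 1], by norm_num [Matrix.det_fin_two_of]⟩

abbrev SL2Z := Matrix.SpecialLinearGroup (Fin 2) ℤ

def W92 : SL2Z := ⟨!![-1, 0; 0, -1], by norm_num [Matrix.det_fin_two_of]⟩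

lemma W92_comm (x : SL2Z) : W92 * x = x * W92 := by
  apply Subtype.ext
  show (W92.1 * x.1 : Matrix (Fin 2) (Fin 2) ℤ) = x.1 * W92.1
  have h : W92.1 = -(1 : Matrix (Fin 2) (Fin 2) ℤ) := by
    ext i j; fin_cases i <;> fin_cases j <;> simp [W92]
  rw [h]; simp

lemma W92_mul_W92 : W92 * W92 = 1 := by
  apply Subtype.ext
  show (W92.1 * W92.1 : Matrix (Fin 2) (Fin 2) ℤ) = 1
  simp [W92, Matrix.mul_fin_two]
  ext i j; fin_cases i <;> fin_cases j <;> simp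

def A92inv : SL2Z := ⟨!![1, 0; -2, 1], by norm_num [Matrix.det_fin_two_of]⟩
def B92inv : SL2Z := ⟨!![1, -2; 0, 1], by norm_num [Matrix.det_fin_two_of]⟩

lemma A92_inv : A92⁻¹ = A92inv := by
  apply inv_eq_of_mul_eq_one_right
  apply Subtype.ext
  show (A92.1 * A92inv.1 : Matrix (Fin 2) (Fin 2) ℤ) = 1
  simp [A92, A92inv, Matrix.mul_fin_two]
  ext i j; fin_cases i <;> fin_cases j <;> simp

lemma B92_inv : B92⁻¹ = B92inv := by
  apply inv_eq_of_mul_eq_one_right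
  apply Subtype.ext
  show (B92.1 * B92inv.1 : Matrix (Fin 2) (Fin 2) ℤ) = 1
  simp [B92, B92inv, Matrix.mul_fin_two]
  ext i j; fin_cases i <;> fin_cases j <;> simp

lemma A92_zpow (k : ℤ) : (A92 ^ k).1 = !![1, 0; 2*k, 1] := by
  induction k using Int.induction_on with
  | zero => simp; ext i j; fin_cases i <;> fin_cases j <;> simp
  | succ n ih =>
      rw [zpow_add_one]
      show ((A92 ^ (n:ℤ)).1 * A92.1 : Matrix (Fin 2) (Fin 2) ℤ) = _
      rw [ih]
      simp [A92, Matrix.mul_fin_two]; ring_nf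
  | pred n ih =>
      rw [zpow_sub_one, A92_inv]
      show ((A92 ^ (-n:ℤ)).1 * A92inv.1 : Matrix (Fin 2) (Fin 2) ℤ) = _
      rw [ih]
      simp [A92inv, Matrix.mul_fin_two]; ring_nf

lemma B92_zpow (k : ℤ) : (B92 ^ k).1 = !![1, 2*k; 0, 1] := by
  induction k using Int.induction_on with
  | zero => simp; ext i j; fin_cases i <;> fin_cases j <;> simp
  | succ n ih =>
      rw [zpow_add_one]
      show ((B92 ^ (n:ℤ)).1 * B92.1 : Matrix (Fin 2) (Fin 2) ℤ) = _
      rw [ih]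
      simp [B92, Matrix.mul_fin_two]; ring_nf
  | pred n ih =>
      rw [zpow_sub_one, B92_inv]
      show ((B92 ^ (-n:ℤ)).1 * B92inv.1 : Matrix (Fin 2) (Fin 2) ℤ) = _
      rw [ih]
      simp [B92inv, Matrix.mul_fin_two]; ring_nf

lemma red92 (a c : ℤ) (hc : c ≠ 0) (hpar : ¬ (2 ∣ (a - c))) :
    ∃ k : ℤ, (a + 2*k*c).natAbs < c.natAbs := by
  set m : ℤ := 2 * |c| with hm
  have hm0 : 0 < m := by positivity
  set r : ℤ := a % m with hr
  have hr0 : 0 ≤ r := Int.emod_nonneg a (by omega)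
  have hr1 : r < m := Int.emod_lt_of_pos a hm0
  have hrdef : r = a - m * (a / m) := by rw [hr, Int.emod_def]
  have habs : |c| = c ∨ |c| = -c := abs_choice c
  have key : ∀ t : ℤ, ∃ k : ℤ, m * t = 2 * k * c := by
    intro t
    rcases habs with h | h
    · exact ⟨t, by rw [hm, h]; ring⟩
    · exact ⟨-t, by rw [hm, h]; ring⟩
  rcases lt_or_ge r |c| with hlt | hge
  · obtain ⟨k, hk⟩ := key (-(a / m))
    refine ⟨k, ?_⟩
    have : a + 2*k*c = r := by rw [← hk, hrdef]; ring
    rw [this]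
    omega
  · have hne : r ≠ |c| := by
      intro h
      apply hpar
      have : a - c = (a - r) + (|c| - c) := by omega
      rw [this]
      have d1 : (2:ℤ) ∣ a - r := by
        rw [hrdef]
        exact ⟨|c| * (a/m), by ring⟩
      have d2 : (2:ℤ) ∣ |c| - c := by rcases habs with h|h <;> omega
      exact dvd_add d1 d2
    obtain ⟨k, hk⟩ := key (-(a / m) - 1)
    refine ⟨k, ?_⟩
    have : a + 2*k*c = r - m := by rw [← hk, hrdef]; ring
    rw [this]
    omega

def K92 : Subgroup SL2Z := Subgroup.closure ({A92, B92} : Set SL2Z)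

lemma A92_mem : A92 ∈ K92 := Subgroup.subset_closure (by simp)
lemma B92_mem : B92 ∈ K92 := Subgroup.subset_closure (by simp)

/-- The subgroup generated by K92 and the central element W92. -/
def V92 : Subgroup SL2Z where
  carrier := {x | x ∈ K92 ∨ W92 * x ∈ K92}
  one_mem' := Or.inl K92.one_mem
  mul_mem' := by
    rintro a b (ha | ha) (hb | hb)
    · exact Or.inl (K92.mul_mem ha hb)
    · refine Or.inr ?_
      have h : W92 * (a * b) = a * (W92 * b) := by
        rw [← mul_assoc, W92_comm a, mul_assoc]
      rw [h]; exact K92.mul_mem ha hb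
    · refine Or.inr ?_
      have h : W92 * (a * b) = (W92 * a) * b := by rw [mul_assoc]
      rw [h]; exact K92.mul_mem ha hb
    · refine Or.inl ?_
      have h : a * b = (W92 * a) * (W92 * b) := by
        rw [mul_assoc, ← mul_assoc a, ← W92_comm a, mul_assoc, ← mul_assoc,
          W92_mul_W92, one_mul]
      rw [h]; exact K92.mul_mem ha hb
  inv_mem' := by
    rintro a (ha | ha)
    · exact Or.inl (K92.inv_mem ha)
    · refine Or.inr ?_
      have hW : W92⁻¹ = W92 := inv_eq_of_mul_eq_one_right W92_mul_W92
      have h : (W92 * a)⁻¹ = W92 * a⁻¹ := by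
        rw [mul_inv_rev, hW, ← W92_comm]
      rw [← h]; exact K92.inv_mem ha

lemma K92_le_V92 : K92 ≤ V92 := fun _ h => Or.inl h

lemma mem_V92_of_W92_mul {x : SL2Z} (h : W92 * x ∈ K92) : x ∈ V92 := Or.inr h

lemma step_entries (j k : ℤ) (M : SL2Z) :
    (A92 ^ j * B92 ^ k * M).1 =
      !![M.1 0 0 + 2*k*M.1 1 0, M.1 0 1 + 2*k*M.1 1 1;
         2*j*(M.1 0 0 + 2*k*M.1 1 0) + M.1 1 0, 2*j*(M.1 0 1 + 2*k*M.1 1 1) + M.1 1 1] := by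
  have h : (A92 ^ j * B92 ^ k * M).1 = (A92 ^ j).1 * ((B92 ^ k).1 * M.1) := by
    show (A92 ^ j).1 * (B92 ^ k).1 * M.1 = _
    rw [mul_assoc]
  rw [h, A92_zpow, B92_zpow, Matrix.eta_fin_two M.1, Matrix.mul_fin_two, Matrix.mul_fin_two]
  apply Matrix.ext
  intro i j'
  fin_cases i <;> fin_cases j' <;> simp <;> ring


/-- Base case: lower-left entry zero. -/
lemma base92 (M : SL2Z) (hb : (2:ℤ) ∣ M.1 0 1) (hc0 : M.1 1 0 = 0) : M ∈ V92 := by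
  have hdet : M.1 0 0 * M.1 1 1 - M.1 0 1 * M.1 1 0 = 1 := by
    have h2 := M.2
    rwa [Matrix.det_fin_two] at h2
  rw [hc0, mul_zero, sub_zero] at hdet
  obtain ⟨e, he⟩ := hb
  rcases Int.mul_eq_one_iff_eq_one_or_neg_one.mp hdet with ⟨h1, h4⟩ | ⟨h1, h4⟩
  · have hM : M = B92 ^ e := by
      apply Subtype.ext
      rw [B92_zpow, Matrix.eta_fin_two M.1, h1, h4, hc0, he]
    rw [hM]
    exact K92_le_V92 (K92.zpow_mem B92_mem e)
  · apply mem_V92_of_W92_mul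
    have hM : W92 * M = B92 ^ (-e) := by
      apply Subtype.ext
      show (W92.1 * M.1 : Matrix (Fin 2) (Fin 2) ℤ) = _
      rw [B92_zpow, Matrix.eta_fin_two M.1, h1, h4, hc0, he, W92]
      apply Matrix.ext
      intro i j
      fin_cases i <;> fin_cases j <;> simp [Matrix.mul_fin_two] <;> ring
    rw [hM]
    exact K92.zpow_mem B92_mem (-e)

lemma main92 : ∀ n : ℕ, ∀ M : SL2Z, (M.1 1 0).natAbs ≤ n →
    ¬ (2:ℤ) ∣ M.1 0 0 → (2:ℤ) ∣ M.1 0 1 → (2:ℤ) ∣ M.1 1 0 → M ∈ V92 := by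
  intro n
  induction n with
  | zero =>
      intro M h _ hb _
      have hc0 : M.1 1 0 = 0 := by omega
      exact base92 M hb hc0
  | succ n ih =>
      intro M h ha hb hc
      by_cases hc0 : M.1 1 0 = 0
      · exact base92 M hb hc0
      · have hpar1 : ¬ (2:ℤ) ∣ (M.1 0 0 - M.1 1 0) := by
          rintro ⟨u, hu⟩
          obtain ⟨v, hv⟩ := hc
          exact ha ⟨u + v, by linarith⟩
        obtain ⟨k, hk⟩ := red92 (M.1 0 0) (M.1 1 0) hc0 hpar1
        have ha'odd : ¬ (2:ℤ) ∣ (M.1 0 0 + 2*k*M.1 1 0) := by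
          rintro ⟨u, hu⟩
          exact ha ⟨u - k * M.1 1 0, by linear_combination hu⟩
        have ha'0 : (M.1 0 0 + 2*k*M.1 1 0) ≠ 0 := fun h => ha'odd (h ▸ dvd_zero 2)
        have hpar2 : ¬ (2:ℤ) ∣ (M.1 1 0 - (M.1 0 0 + 2*k*M.1 1 0)) := by
          rintro ⟨u, hu⟩
          obtain ⟨v, hv⟩ := hc
          exact ha'odd ⟨v - u, by linear_combination hv - hu⟩
        obtain ⟨jj, hj⟩ := red92 (M.1 1 0) (M.1 0 0 + 2*k*M.1 1 0) ha'0 hpar2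
        set M' : SL2Z := A92 ^ jj * B92 ^ k * M with hM'
        have hstep := step_entries jj k M
        rw [← hM'] at hstep
        have e00 : M'.1 0 0 = M.1 0 0 + 2*k*M.1 1 0 := by rw [hstep]; simp
        have e01 : M'.1 0 1 = M.1 0 1 + 2*k*(M.1 1 1) := by rw [hstep]; simp
        have e10 : M'.1 1 0 = M.1 1 0 + 2*jj*(M.1 0 0 + 2*k*M.1 1 0) := by
          rw [hstep]; simp; ring
        have hmem : M' ∈ V92 := by
          apply ih M'
          · rw [e10]
            exact Nat.lt_succ_iff.mp (lt_of_lt_of_le (hj.trans hk) h)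
          · rw [e00]; exact ha'odd
          · rw [e01]
            obtain ⟨v, hv⟩ := hb
            exact ⟨v + k * M.1 1 1, by linear_combination hv⟩
          · rw [e10]
            obtain ⟨v, hv⟩ := hc
            exact ⟨v + jj * (M.1 0 0 + 2*k*M.1 1 0), by linear_combination hv⟩
        have hg : A92 ^ jj * B92 ^ k ∈ V92 :=
          V92.mul_mem (K92_le_V92 (K92.zpow_mem A92_mem jj))
            (K92_le_V92 (K92.zpow_mem B92_mem k))
        rw [hM'] at hmem
        exact (mul_mem_cancel_left hg).mp hmem

lemma ker_le_V92 :
    (Matrix.SpecialLinearGroup.map (n := Fin 2) (Int.castRingHom (ZMod 2))).ker ≤ V92 := by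
  intro M hM
  rw [MonoidHom.mem_ker] at hM
  have hmat : (M.1.map (Int.cast : ℤ → ZMod 2)) = (1 : Matrix (Fin 2) (Fin 2) (ZMod 2)) :=
    congrArg Subtype.val hM
  have hent : ∀ i j, ((M.1 i j : ℤ) : ZMod 2) = (1 : Matrix (Fin 2) (Fin 2) (ZMod 2)) i j := by
    intro i j
    have := congrFun (congrFun hmat i) j
    simpa [Matrix.map_apply] using this
  have h00 : ¬ (2:ℤ) ∣ M.1 0 0 := by
    have h := hent 0 0
    rw [Matrix.one_apply_eq] at h
    have h2 : (((M.1 0 0 - 1 : ℤ)) : ZMod 2) = 0 := by push_cast [h]; ring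
    rw [ZMod.intCast_zmod_eq_zero_iff_dvd] at h2
    omega
  have h01 : (2:ℤ) ∣ M.1 0 1 := by
    have h := hent 0 1
    rw [Matrix.one_apply_ne (by decide)] at h
    rwa [ZMod.intCast_zmod_eq_zero_iff_dvd] at h
    
  have h10 : (2:ℤ) ∣ M.1 1 0 := by
    have h := hent 1 0
    rw [Matrix.one_apply_ne (by decide)] at h
    rwa [ZMod.intCast_zmod_eq_zero_iff_dvd] at h
  exact main92 (M.1 1 0).natAbs M le_rfl h00 h01 h10

theorem stmt9 :
    Subgroup.closure ({A92, B92} : Set (Matrix.SpecialLinearGroup (Fin 2) ℤ)) ≤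
        (Matrix.SpecialLinearGroup.map (n := Fin 2) (Int.castRingHom (ZMod 2))).ker ∧
      (Subgroup.closure ({A92, B92} : Set (Matrix.SpecialLinearGroup (Fin 2) ℤ))).FiniteIndex := by
  set f := Matrix.SpecialLinearGroup.map (n := Fin 2) (Int.castRingHom (ZMod 2)) with hf
  have hAker : A92 ∈ f.ker := by
    rw [MonoidHom.mem_ker]
    apply Subtype.ext
    show (A92.1.map (Int.cast : ℤ → ZMod 2)) = (1 : Matrix (Fin 2) (Fin 2) (ZMod 2))
    ext i j
    fin_cases i <;> fin_cases j <;> simp [A92] <;> decide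
  have hBker : B92 ∈ f.ker := by
    rw [MonoidHom.mem_ker]
    apply Subtype.ext
    show (B92.1.map (Int.cast : ℤ → ZMod 2)) = (1 : Matrix (Fin 2) (Fin 2) (ZMod 2))
    ext i j
    fin_cases i <;> fin_cases j <;> simp [B92] <;> decide
  constructor
  · rw [Subgroup.closure_le]
    rintro x hx
    rcases hx with rfl | rfl
    · exact hAker
    · exact hBker
  · -- finite index
    haveI : f.ker.FiniteIndex := Subgroup.finiteIndex_ker f
    obtain ⟨t, -, hcover⟩ :=
      Subgroup.exists_leftTransversal_of_FiniteIndex (D := f.ker) (H := ⊤) le_top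
    show K92.FiniteIndex
    apply Subgroup.finiteIndex_of_leftCoset_cover_const
      (s := t ×ˢ (Finset.univ : Finset Bool))
      (g := fun p => (p.1 : SL2Z) * (if p.2 then W92 else 1))
    apply Set.eq_univ_of_forall
    intro x
    have hx : x ∈ ((⊤ : Subgroup SL2Z) : Set SL2Z) := trivial
    rw [← hcover] at hx
    simp only [Set.mem_iUnion] at hx
    obtain ⟨r, hr, hxr⟩ := hx
    rw [mem_leftCoset_iff] at hxr
    have hv : (r : SL2Z)⁻¹ * x ∈ V92 := ker_le_V92 hxr
    have hW : W92⁻¹ = W92 := inv_eq_of_mul_eq_one_right W92_mul_W92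
    simp only [Set.mem_iUnion]
    rcases hv with hK | hK
    · refine ⟨(r, false), by simp [hr], ?_⟩
      rw [mem_leftCoset_iff]
      simpa using hK
    · refine ⟨(r, true), by simp [hr], ?_⟩
      rw [mem_leftCoset_iff]
      simp only [if_pos]
      have : ((r : SL2Z) * W92)⁻¹ * x = W92 * ((r : SL2Z)⁻¹ * x) := by
        rw [mul_inv_rev, hW, mul_assoc]
      rw [this]
      exact hK
end
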